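/- If F = f + iw + ju + kv : ℍⁿ → ℍ is twice continuously differentiable and anti-regular (i.e., D_α F = (∂_{t^α} - i∂_{x^α} - j∂_{y^α} - k∂_{z^α})F = 0 for all α), then its real part f satisfies D_α D̄_β f = 0 for all α, β; equivalently f satisfies the 4n² real equations: ∂²_{t^β t^α}f + ∂²_{x^β x^α}f + ∂²_{y^β y^α}f + ∂²_{z^β z^α}f = 0, -∂²_{x^β t^α}f + ∂²_{t^β x^α}f - ∂²_{y^β z^α}f + ∂²_{z^β y^α}f = 0, ∂²_{t^β y^α}f + ∂²_{x^β z^α}f - ∂²_{y^β t^α}f - ∂²_{z^β x^α}f = 0, ∂²_{t^β z^α}f - ∂²_{x^β y^α}f + ∂²_{y^β x^α}f - ∂²_{z^β t^α}f = 0. -/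

import Mathlib

open scoped Quaternion


/-- The quaternion unit `i`. -/
def qI : ℍ[ℝ] := ⟨0, 1, 0, 0⟩
/-- The quaternion unit `j`. -/
def qJ : ℍ[ℝ] := ⟨0, 0, 1, 0⟩
/-- The quaternion unit `k`. -/
def qK : ℍ[ℝ] := ⟨0, 0, 0, 1⟩

/-- Points of `ℍⁿ ≅ ℝ^{4n}`, with `qᵅ = tᵅ + i xᵅ + j yᵅ + k zᵅ`. -/
abbrev QPt (n : ℕ) := Fin n → ℝ × ℝ × ℝ × ℝ

/-- The coordinate basis vector in the direction of the `m`-th real coordinate of the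
`α`-th quaternionic variable (`m = 0,1,2,3` for `t,x,y,z`). -/
def qBase {n : ℕ} (α : Fin n) (m : Fin 4) : QPt n := fun β =>
  if β = α then
    (match m with
      | 0 => ((1:ℝ), 0, 0, 0)
      | 1 => (0, (1:ℝ), 0, 0)
      | 2 => (0, 0, (1:ℝ), 0)
      | 3 => (0, 0, 0, (1:ℝ)))
  else 0

/-- Partial derivative of a real-valued function in direction `v`. -/
noncomputable def pdR {n : ℕ} (v : QPt n) (f : QPt n → ℝ) : QPt n → ℝ :=
  fun p => fderiv ℝ f p v

/-- Partial derivative of a quaternion-valued function in direction `v`. -/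
noncomputable def pdQ {n : ℕ} (v : QPt n) (F : QPt n → ℍ[ℝ]) : QPt n → ℍ[ℝ] :=
  fun p => fderiv ℝ F p v

/-- `D_α f = ∂_{tᵅ}f - i ∂_{xᵅ}f - j ∂_{yᵅ}f - k ∂_{zᵅ}f` for a real function `f`. -/
noncomputable def Dlow {n : ℕ} (α : Fin n) (f : QPt n → ℝ) : QPt n → ℍ[ℝ] :=
  fun p => ⟨pdR (qBase α 0) f p, -(pdR (qBase α 1) f p),
    -(pdR (qBase α 2) f p), -(pdR (qBase α 3) f p)⟩

/-- `D̄_β f = ∂_{tᵝ}f + i ∂_{xᵝ}f + j ∂_{yᵝ}f + k ∂_{zᵝ}f` for a real function `f`. -/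
noncomputable def DbarLow {n : ℕ} (β : Fin n) (f : QPt n → ℝ) : QPt n → ℍ[ℝ] :=
  fun p => ⟨pdR (qBase β 0) f p, pdR (qBase β 1) f p,
    pdR (qBase β 2) f p, pdR (qBase β 3) f p⟩

/-- `D̄_β G = ∂_{tᵝ}G + i ∂_{xᵝ}G + j ∂_{yᵝ}G + k ∂_{zᵝ}G` for a quaternion-valued `G`. -/
noncomputable def DbarQ {n : ℕ} (β : Fin n) (G : QPt n → ℍ[ℝ]) : QPt n → ℍ[ℝ] :=
  fun p => pdQ (qBase β 0) G p + qI * pdQ (qBase β 1) G p +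
    qJ * pdQ (qBase β 2) G p +
    qK * pdQ (qBase β 3) G p

/-- `D_α G = ∂_{tᵅ}G - i ∂_{xᵅ}G - j ∂_{yᵅ}G - k ∂_{zᵅ}G` for a quaternion-valued `G`. -/
noncomputable def DQ {n : ℕ} (α : Fin n) (G : QPt n → ℍ[ℝ]) : QPt n → ℍ[ℝ] :=
  fun p => pdQ (qBase α 0) G p - qI * pdQ (qBase α 1) G p -
    qJ * pdQ (qBase α 2) G p -
    qK * pdQ (qBase α 3) G p


/-! ### Auxiliary material -/

noncomputable def rCLM : ℍ[ℝ] →L[ℝ] ℝ :=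
  { toLinearMap := (QuaternionAlgebra.reₗ (-1) 0 (-1) : ℍ[ℝ] →ₗ[ℝ] ℝ),
    cont := Quaternion.continuous_re }
noncomputable def iCLM : ℍ[ℝ] →L[ℝ] ℝ :=
  { toLinearMap := (QuaternionAlgebra.imIₗ (-1) 0 (-1) : ℍ[ℝ] →ₗ[ℝ] ℝ),
    cont := Quaternion.continuous_imI }
noncomputable def jCLM : ℍ[ℝ] →L[ℝ] ℝ :=
  { toLinearMap := (QuaternionAlgebra.imJₗ (-1) 0 (-1) : ℍ[ℝ] →ₗ[ℝ] ℝ),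
    cont := Quaternion.continuous_imJ }
noncomputable def kCLM : ℍ[ℝ] →L[ℝ] ℝ :=
  { toLinearMap := (QuaternionAlgebra.imKₗ (-1) 0 (-1) : ℍ[ℝ] →ₗ[ℝ] ℝ),
    cont := Quaternion.continuous_imK }
@[simp] lemma rCLM_apply (q : ℍ[ℝ]) : rCLM q = q.re := rfl
@[simp] lemma iCLM_apply (q : ℍ[ℝ]) : iCLM q = q.imI := rfl
@[simp] lemma jCLM_apply (q : ℍ[ℝ]) : jCLM q = q.imJ := rfl
@[simp] lemma kCLM_apply (q : ℍ[ℝ]) : kCLM q = q.imK := rfl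

variable {n : ℕ}

lemma pdR_comp (φ : ℍ[ℝ] →L[ℝ] ℝ) (F : QPt n → ℍ[ℝ]) (hF : Differentiable ℝ F)
    (v : QPt n) (p : QPt n) :
    pdR v (fun q => φ (F q)) p = φ (pdQ v F p) := by
  have h : fderiv ℝ (fun q => φ (F q)) p = φ.comp (fderiv ℝ F p) := by
    rw [show (fun q => φ (F q)) = φ ∘ F from rfl,
      fderiv_comp p φ.differentiableAt (hF p), φ.fderiv]
  simp [pdR, pdQ, h]

lemma pdR_contDiff (g : QPt n → ℝ) (hg : ContDiff ℝ 2 g) (v : QPt n) :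
    ContDiff ℝ 1 (pdR v g) := by
  have h1 : ContDiff ℝ 1 (fderiv ℝ g) := hg.fderiv_right (by norm_num)
  exact (ContinuousLinearMap.apply ℝ ℝ v).contDiff.comp h1

lemma pdR_swap (g : QPt n → ℝ) (hg : ContDiff ℝ 2 g) (v w : QPt n) (p : QPt n) :
    pdR v (pdR w g) p = pdR w (pdR v g) p := by
  have hd : DifferentiableAt ℝ (fderiv ℝ g) p :=
    ((hg.fderiv_right (m := 1) (by norm_num)).differentiable one_ne_zero) p
  have key : ∀ u z : QPt n,
      pdR u (pdR z g) p = fderiv ℝ (fderiv ℝ g) p u z := by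
    intro u z
    have h1 : fderiv ℝ (fun q => (ContinuousLinearMap.apply ℝ ℝ z) (fderiv ℝ g q)) p
        = (ContinuousLinearMap.apply ℝ ℝ z).comp (fderiv ℝ (fderiv ℝ g) p) := by
      rw [show (fun q => (ContinuousLinearMap.apply ℝ ℝ z) (fderiv ℝ g q))
          = (ContinuousLinearMap.apply ℝ ℝ z) ∘ (fderiv ℝ g) from rfl,
        fderiv_comp p (ContinuousLinearMap.differentiableAt _) hd,
        ContinuousLinearMap.fderiv]
    have h2 : pdR u (pdR z g) p
        = fderiv ℝ (fun q => (ContinuousLinearMap.apply ℝ ℝ z) (fderiv ℝ g q)) p u := rfl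
    rw [h2, h1]; rfl
  rw [key v w, key w v]
  exact (hg.contDiffAt.isSymmSndFDerivAt (by simp [minSmoothness_of_isRCLikeNormedField])) v w

lemma pd_lin4 (g1 g2 g3 g4 : QPt n → ℝ)
    (h1 : ContDiff ℝ 1 g1) (h2 : ContDiff ℝ 1 g2) (h3 : ContDiff ℝ 1 g3) (h4 : ContDiff ℝ 1 g4)
    (c1 c2 c3 c4 : ℝ)
    (h : ∀ q, c1 * g1 q + c2 * g2 q + c3 * g3 q + c4 * g4 q = 0) (v p : QPt n) :
    c1 * pdR v g1 p + c2 * pdR v g2 p + c3 * pdR v g3 p + c4 * pdR v g4 p = 0 := by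
  have H : HasFDerivAt (fun q => c1 * g1 q + c2 * g2 q + c3 * g3 q + c4 * g4 q)
      (c1 • fderiv ℝ g1 p + c2 • fderiv ℝ g2 p + c3 • fderiv ℝ g3 p + c4 • fderiv ℝ g4 p) p := by
    exact ((((h1.differentiable one_ne_zero p).hasFDerivAt.const_mul c1).add
      ((h2.differentiable one_ne_zero p).hasFDerivAt.const_mul c2)).add
      ((h3.differentiable one_ne_zero p).hasFDerivAt.const_mul c3)).add
      ((h4.differentiable one_ne_zero p).hasFDerivAt.const_mul c4)
  rw [show (fun q => c1 * g1 q + c2 * g2 q + c3 * g3 q + c4 * g4 q) = fun _ => (0:ℝ)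
    from funext h] at H
  have h0 := congrArg (fun L : QPt n →L[ℝ] ℝ => L v) (H.unique (hasFDerivAt_const 0 p))
  simpa [pdR, mul_comm] using h0

lemma diff_DbarLow (g : QPt n → ℝ) (hg : ContDiff ℝ 2 g) (β : Fin n) :
    Differentiable ℝ (DbarLow β g) := by
  have h : DbarLow β g = fun q => (pdR (qBase β 0) g q) • (1:ℍ[ℝ])
      + (pdR (qBase β 1) g q) • qI + (pdR (qBase β 2) g q) • qJ
      + (pdR (qBase β 3) g q) • qK := by
    funext q
    ext <;> simp [DbarLow] <;> simp [qI, qJ, qK]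
  rw [h]
  exact (((((pdR_contDiff g hg _).differentiable one_ne_zero).smul_const _).add
    (((pdR_contDiff g hg _).differentiable one_ne_zero).smul_const _)).add
    (((pdR_contDiff g hg _).differentiable one_ne_zero).smul_const _)).add
    (((pdR_contDiff g hg _).differentiable one_ne_zero).smul_const _)

/-- If `F : ℍⁿ → ℍ` is `C²` and anti-regular (`D_α F = 0` for all `α`), then its real
part `f` satisfies `D_α D̄_β f = 0` for all `α, β`; equivalently `f` satisfies the
displayed system of `4n²` real second-order PDEs. -/
theorem real_part_of_antiregular {n : ℕ} (F : QPt n → ℍ[ℝ]) (hF : ContDiff ℝ 2 F)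
    (hanti : ∀ α : Fin n, DQ α F = 0) :
    (∀ α β : Fin n, DQ α (DbarLow β (fun p => (F p).re)) = 0) ∧
    (∀ (α β : Fin n) (p : QPt n),
      (pdR (qBase β 0) (pdR (qBase α 0) (fun q => (F q).re)) p +
        pdR (qBase β 1) (pdR (qBase α 1) (fun q => (F q).re)) p +
        pdR (qBase β 2) (pdR (qBase α 2) (fun q => (F q).re)) p +
        pdR (qBase β 3) (pdR (qBase α 3) (fun q => (F q).re)) p = 0) ∧
      (-(pdR (qBase β 1) (pdR (qBase α 0) (fun q => (F q).re)) p) +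
        pdR (qBase β 0) (pdR (qBase α 1) (fun q => (F q).re)) p -
        pdR (qBase β 2) (pdR (qBase α 3) (fun q => (F q).re)) p +
        pdR (qBase β 3) (pdR (qBase α 2) (fun q => (F q).re)) p = 0) ∧
      (pdR (qBase β 0) (pdR (qBase α 2) (fun q => (F q).re)) p +
        pdR (qBase β 1) (pdR (qBase α 3) (fun q => (F q).re)) p -
        pdR (qBase β 2) (pdR (qBase α 0) (fun q => (F q).re)) p -
        pdR (qBase β 3) (pdR (qBase α 1) (fun q => (F q).re)) p = 0) ∧
      (pdR (qBase β 0) (pdR (qBase α 3) (fun q => (F q).re)) p -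
        pdR (qBase β 1) (pdR (qBase α 2) (fun q => (F q).re)) p +
        pdR (qBase β 2) (pdR (qBase α 1) (fun q => (F q).re)) p -
        pdR (qBase β 3) (pdR (qBase α 0) (fun q => (F q).re)) p = 0)) := by
  have hFd : Differentiable ℝ F := hF.differentiable (by norm_num)
  have hfr2 : ContDiff ℝ 2 (fun q => (F q).re) := rCLM.contDiff.comp hF
  have hfi2 : ContDiff ℝ 2 (fun q => (F q).imI) := iCLM.contDiff.comp hF
  have hfj2 : ContDiff ℝ 2 (fun q => (F q).imJ) := jCLM.contDiff.comp hF
  have hfk2 : ContDiff ℝ 2 (fun q => (F q).imK) := kCLM.contDiff.comp hF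
  have hre : ∀ (v p : QPt n), (pdQ v F p).re = pdR v (fun q => (F q).re) p := by
    intro v p
    have h := pdR_comp rCLM F hFd v p
    simpa using h.symm
  have him1 : ∀ (v p : QPt n), (pdQ v F p).imI = pdR v (fun q => (F q).imI) p := by
    intro v p
    have h := pdR_comp iCLM F hFd v p
    simpa using h.symm
  have him2 : ∀ (v p : QPt n), (pdQ v F p).imJ = pdR v (fun q => (F q).imJ) p := by
    intro v p
    have h := pdR_comp jCLM F hFd v p
    simpa using h.symm
  have him3 : ∀ (v p : QPt n), (pdQ v F p).imK = pdR v (fun q => (F q).imK) p := by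
    intro v p
    have h := pdR_comp kCLM F hFd v p
    simpa using h.symm
  have E : ∀ (γ : Fin n) (q : QPt n), (pdR (qBase γ 0) (fun q => (F q).re) q + pdR (qBase γ 1) (fun q => (F q).imI) q + pdR (qBase γ 2) (fun q => (F q).imJ) q + pdR (qBase γ 3) (fun q => (F q).imK) q = 0) ∧ (pdR (qBase γ 0) (fun q => (F q).imI) q - pdR (qBase γ 1) (fun q => (F q).re) q - pdR (qBase γ 2) (fun q => (F q).imK) q + pdR (qBase γ 3) (fun q => (F q).imJ) q = 0) ∧ (pdR (qBase γ 0) (fun q => (F q).imJ) q + pdR (qBase γ 1) (fun q => (F q).imK) q - pdR (qBase γ 2) (fun q => (F q).re) q - pdR (qBase γ 3) (fun q => (F q).imI) q = 0) ∧ (pdR (qBase γ 0) (fun q => (F q).imK) q - pdR (qBase γ 1) (fun q => (F q).imJ) q + pdR (qBase γ 2) (fun q => (F q).imI) q - pdR (qBase γ 3) (fun q => (F q).re) q = 0) := by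
    intro γ q
    have h := congrFun (hanti γ) q
    simp only [DQ, Pi.zero_apply] at h
    have h1 := congrArg QuaternionAlgebra.re h
    have h2 := congrArg QuaternionAlgebra.imI h
    have h3 := congrArg QuaternionAlgebra.imJ h
    have h4 := congrArg QuaternionAlgebra.imK h
    simp only [Quaternion.re_sub, Quaternion.imI_sub, Quaternion.imJ_sub, Quaternion.imK_sub, Quaternion.re_mul, Quaternion.imI_mul, Quaternion.imJ_mul, Quaternion.imK_mul] at h1 h2 h3 h4
    simp [hre, him1, him2, him3, qI, qJ, qK] at h1 h2 h3 h4
    refine ⟨by linarith, by linarith, by linarith, by linarith⟩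
  have dE1 : ∀ (γ : Fin n) (v p : QPt n), pdR v (pdR (qBase γ 0) (fun q => (F q).re)) p + pdR v (pdR (qBase γ 1) (fun q => (F q).imI)) p + pdR v (pdR (qBase γ 2) (fun q => (F q).imJ)) p + pdR v (pdR (qBase γ 3) (fun q => (F q).imK)) p = 0 := by
    intro γ v p
    have h := pd_lin4 (pdR (qBase γ 0) (fun q => (F q).re)) (pdR (qBase γ 1) (fun q => (F q).imI)) (pdR (qBase γ 2) (fun q => (F q).imJ)) (pdR (qBase γ 3) (fun q => (F q).imK)) (pdR_contDiff _ hfr2 _) (pdR_contDiff _ hfi2 _) (pdR_contDiff _ hfj2 _) (pdR_contDiff _ hfk2 _) 1 1 1 1 (fun q => by have h0 := (E γ q).1; linarith) v p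
    linarith
  have dE2 : ∀ (γ : Fin n) (v p : QPt n), pdR v (pdR (qBase γ 0) (fun q => (F q).imI)) p - pdR v (pdR (qBase γ 1) (fun q => (F q).re)) p - pdR v (pdR (qBase γ 2) (fun q => (F q).imK)) p + pdR v (pdR (qBase γ 3) (fun q => (F q).imJ)) p = 0 := by
    intro γ v p
    have h := pd_lin4 (pdR (qBase γ 0) (fun q => (F q).imI)) (pdR (qBase γ 1) (fun q => (F q).re)) (pdR (qBase γ 2) (fun q => (F q).imK)) (pdR (qBase γ 3) (fun q => (F q).imJ)) (pdR_contDiff _ hfi2 _) (pdR_contDiff _ hfr2 _) (pdR_contDiff _ hfk2 _) (pdR_contDiff _ hfj2 _) 1 (-1) (-1) 1 (fun q => by have h0 := (E γ q).2.1; linarith) v p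
    linarith
  have dE3 : ∀ (γ : Fin n) (v p : QPt n), pdR v (pdR (qBase γ 0) (fun q => (F q).imJ)) p + pdR v (pdR (qBase γ 1) (fun q => (F q).imK)) p - pdR v (pdR (qBase γ 2) (fun q => (F q).re)) p - pdR v (pdR (qBase γ 3) (fun q => (F q).imI)) p = 0 := by
    intro γ v p
    have h := pd_lin4 (pdR (qBase γ 0) (fun q => (F q).imJ)) (pdR (qBase γ 1) (fun q => (F q).imK)) (pdR (qBase γ 2) (fun q => (F q).re)) (pdR (qBase γ 3) (fun q => (F q).imI)) (pdR_contDiff _ hfj2 _) (pdR_contDiff _ hfk2 _) (pdR_contDiff _ hfr2 _) (pdR_contDiff _ hfi2 _) 1 1 (-1) (-1) (fun q => by have h0 := (E γ q).2.2.1; linarith) v p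
    linarith
  have dE4 : ∀ (γ : Fin n) (v p : QPt n), pdR v (pdR (qBase γ 0) (fun q => (F q).imK)) p - pdR v (pdR (qBase γ 1) (fun q => (F q).imJ)) p + pdR v (pdR (qBase γ 2) (fun q => (F q).imI)) p - pdR v (pdR (qBase γ 3) (fun q => (F q).re)) p = 0 := by
    intro γ v p
    have h := pd_lin4 (pdR (qBase γ 0) (fun q => (F q).imK)) (pdR (qBase γ 1) (fun q => (F q).imJ)) (pdR (qBase γ 2) (fun q => (F q).imI)) (pdR (qBase γ 3) (fun q => (F q).re)) (pdR_contDiff _ hfk2 _) (pdR_contDiff _ hfj2 _) (pdR_contDiff _ hfi2 _) (pdR_contDiff _ hfr2 _) 1 (-1) 1 (-1) (fun q => by have h0 := (E γ q).2.2.2; linarith) v p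
    linarith
  have key : ∀ (α β : Fin n) (p : QPt n), (pdR (qBase β 0) (pdR (qBase α 0) (fun q => (F q).re)) p + pdR (qBase β 1) (pdR (qBase α 1) (fun q => (F q).re)) p + pdR (qBase β 2) (pdR (qBase α 2) (fun q => (F q).re)) p + pdR (qBase β 3) (pdR (qBase α 3) (fun q => (F q).re)) p = 0) ∧ (-pdR (qBase β 1) (pdR (qBase α 0) (fun q => (F q).re)) p + pdR (qBase β 0) (pdR (qBase α 1) (fun q => (F q).re)) p - pdR (qBase β 2) (pdR (qBase α 3) (fun q => (F q).re)) p + pdR (qBase β 3) (pdR (qBase α 2) (fun q => (F q).re)) p = 0) ∧ (pdR (qBase β 0) (pdR (qBase α 2) (fun q => (F q).re)) p + pdR (qBase β 1) (pdR (qBase α 3) (fun q => (F q).re)) p - pdR (qBase β 2) (pdR (qBase α 0) (fun q => (F q).re)) p - pdR (qBase β 3) (pdR (qBase α 1) (fun q => (F q).re)) p = 0) ∧ (pdR (qBase β 0) (pdR (qBase α 3) (fun q => (F q).re)) p - pdR (qBase β 1) (pdR (qBase α 2) (fun q => (F q).re)) p + pdR (qBase β 2) (pdR (qBase α 1) (fun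 q => (F q).re)) p - pdR (qBase β 3) (pdR (qBase α 0) (fun q => (F q).re)) p = 0) := by
    intro α β p
    have swre : ∀ (m l : Fin 4), pdR (qBase α m) (pdR (qBase β l) (fun q => (F q).re)) p = pdR (qBase β l) (pdR (qBase α m) (fun q => (F q).re)) p := fun m l => pdR_swap _ hfr2 _ _ p
    have swimI : ∀ (m l : Fin 4), pdR (qBase α m) (pdR (qBase β l) (fun q => (F q).imI)) p = pdR (qBase β l) (pdR (qBase α m) (fun q => (F q).imI)) p := fun m l => pdR_swap _ hfi2 _ _ p
    have swimJ : ∀ (m l : Fin 4), pdR (qBase α m) (pdR (qBase β l) (fun q => (F q).imJ)) p = pdR (qBase β l) (pdR (qBase α m) (fun q => (F q).imJ)) p := fun m l => pdR_swap _ hfj2 _ _ p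
    have swimK : ∀ (m l : Fin 4), pdR (qBase α m) (pdR (qBase β l) (fun q => (F q).imK)) p = pdR (qBase β l) (pdR (qBase α m) (fun q => (F q).imK)) p := fun m l => pdR_swap _ hfk2 _ _ p
    have B10 := dE1 β (qBase α 0) p
    have B11 := dE1 β (qBase α 1) p
    have B12 := dE1 β (qBase α 2) p
    have B13 := dE1 β (qBase α 3) p
    have B20 := dE2 β (qBase α 0) p
    have B21 := dE2 β (qBase α 1) p
    have B22 := dE2 β (qBase α 2) p
    have B23 := dE2 β (qBase α 3) p
    have B30 := dE3 β (qBase α 0) p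
    have B31 := dE3 β (qBase α 1) p
    have B32 := dE3 β (qBase α 2) p
    have B33 := dE3 β (qBase α 3) p
    have B40 := dE4 β (qBase α 0) p
    have B41 := dE4 β (qBase α 1) p
    have B42 := dE4 β (qBase α 2) p
    have B43 := dE4 β (qBase α 3) p
    simp only [swre, swimI, swimJ, swimK] at B10 B11 B12 B13 B20 B21 B22 B23 B30 B31 B32 B33 B40 B41 B42 B43
    have A10 := dE1 α (qBase β 0) p
    have A11 := dE1 α (qBase β 1) p
    have A12 := dE1 α (qBase β 2) p
    have A13 := dE1 α (qBase β 3) p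
    have A20 := dE2 α (qBase β 0) p
    have A21 := dE2 α (qBase β 1) p
    have A22 := dE2 α (qBase β 2) p
    have A23 := dE2 α (qBase β 3) p
    have A30 := dE3 α (qBase β 0) p
    have A31 := dE3 α (qBase β 1) p
    have A32 := dE3 α (qBase β 2) p
    have A33 := dE3 α (qBase β 3) p
    have A40 := dE4 α (qBase β 0) p
    have A41 := dE4 α (qBase β 1) p
    have A42 := dE4 α (qBase β 2) p
    have A43 := dE4 α (qBase β 3) p
    refine ⟨by linarith, by linarith, by linarith, by linarith⟩
  refine ⟨?_, key⟩
  intro α β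
  have hG : Differentiable ℝ (DbarLow β (fun q => (F q).re)) := diff_DbarLow _ hfr2 β
  funext p
  have hgre : ∀ (v p : QPt n), (pdQ v (DbarLow β (fun q => (F q).re)) p).re = pdR v (fun q => (DbarLow β (fun q => (F q).re) q).re) p := by
    intro v p
    have h := pdR_comp rCLM _ hG v p
    simpa using h.symm
  have hgi : ∀ (v p : QPt n), (pdQ v (DbarLow β (fun q => (F q).re)) p).imI = pdR v (fun q => (DbarLow β (fun q => (F q).re) q).imI) p := by
    intro v p
    have h := pdR_comp iCLM _ hG v p
    simpa using h.symm
  have hgj : ∀ (v p : QPt n), (pdQ v (DbarLow β (fun q => (F q).re)) p).imJ = pdR v (fun q => (DbarLow β (fun q => (F q).re) q).imJ) p := by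
    intro v p
    have h := pdR_comp jCLM _ hG v p
    simpa using h.symm
  have hgk : ∀ (v p : QPt n), (pdQ v (DbarLow β (fun q => (F q).re)) p).imK = pdR v (fun q => (DbarLow β (fun q => (F q).re) q).imK) p := by
    intro v p
    have h := pdR_comp kCLM _ hG v p
    simpa using h.symm
  have hcomp0 : (fun q => (DbarLow β (fun q => (F q).re) q).re) = pdR (qBase β 0) (fun q => (F q).re) := by funext q; simp [DbarLow]
  have hcomp1 : (fun q => (DbarLow β (fun q => (F q).re) q).imI) = pdR (qBase β 1) (fun q => (F q).re) := by funext q; simp [DbarLow]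
  have hcomp2 : (fun q => (DbarLow β (fun q => (F q).re) q).imJ) = pdR (qBase β 2) (fun q => (F q).re) := by funext q; simp [DbarLow]
  have hcomp3 : (fun q => (DbarLow β (fun q => (F q).re) q).imK) = pdR (qBase β 3) (fun q => (F q).re) := by funext q; simp [DbarLow]
  have swre : ∀ (m l : Fin 4), pdR (qBase α m) (pdR (qBase β l) (fun q => (F q).re)) p = pdR (qBase β l) (pdR (qBase α m) (fun q => (F q).re)) p := fun m l => pdR_swap _ hfr2 _ _ p
  obtain ⟨k1, k2, k3, k4⟩ := key α β p
  show DQ α (DbarLow β (fun q => (F q).re)) p = 0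
  simp only [DQ]
  ext
  all_goals simp only [Quaternion.re_sub, Quaternion.imI_sub, Quaternion.imJ_sub, Quaternion.imK_sub, Quaternion.re_mul, Quaternion.imI_mul, Quaternion.imJ_mul, Quaternion.imK_mul]
  all_goals simp [qI, qJ, qK, hgre, hgi, hgj, hgk, hcomp0, hcomp1, hcomp2, hcomp3]
  all_goals simp only [swre] at *
  all_goals linarith
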